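/- Let (g^{αβ}) be a symmetric (1+N)×(1+N) matrix with signature such that the matrix (a^{αβ}) defined by a^{00} = -g^{00}, a^{ij} = g^{ij} for i,j ≥ 1, a^{0j} = a^{i0} = 0, is positive semidefinite. Suppose n ∈ ℝ^{1+N} satisfies g^{αβ} n_α n_β = 0 and n_0 > 0, and F ≥ 0. Then for any ξ ∈ ℝ^{1+N}, n_0 [(1/2) g^{αβ} ξ_α ξ_β + F] - ξ_0 g^{αβ} n_α ξ_β ≥ 0. (Hint: write ζ := ξ - (ξ_0/n_0) n, note ζ_0 = 0, and the expression equals (n_0/2) g^{αβ} ζ_α ζ_β + n_0 F = (n_0/2) a^{αβ} ζ_α ζ_β + n_0 F ≥ 0.) -/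

import Mathlib

theorem stmt18 (N : ℕ) (g : Matrix (Fin (N+1)) (Fin (N+1)) ℝ)
    (hsym : ∀ α β, g α β = g β α)
    (a : Matrix (Fin (N+1)) (Fin (N+1)) ℝ)
    (ha : ∀ α β, a α β =
      if α = 0 ∧ β = 0 then -g 0 0 else if α = 0 ∨ β = 0 then 0 else g α β)
    -- (a^{αβ}) positive semidefinite
    (hpsd : ∀ ξ : Fin (N+1) → ℝ, 0 ≤ ∑ α, ∑ β, a α β * ξ α * ξ β)
    -- n is a null covector with n₀ > 0
    (n : Fin (N+1) → ℝ) (hnull : ∑ α, ∑ β, g α β * n α * n β = 0) (hn0 : 0 < n 0)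
    (F : ℝ) (hF : 0 ≤ F) :
    ∀ ξ : Fin (N+1) → ℝ,
      0 ≤ n 0 * ((1/2) * (∑ α, ∑ β, g α β * ξ α * ξ β) + F)
            - ξ 0 * ∑ α, ∑ β, g α β * n α * ξ β := by
  intro ξ
  set c : ℝ := ξ 0 / n 0 with hc
  set ζ : Fin (N+1) → ℝ := fun α => ξ α - c * n α with hζ
  have hζ0 : ζ 0 = 0 := by
    simp only [hζ, hc]
    field_simp
    ring
  -- sums
  set S1 := ∑ α, ∑ β, g α β * ξ α * ξ β with hS1
  set S2 := ∑ α, ∑ β, g α β * n α * ξ β with hS2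
  have hS3 : ∑ α, ∑ β, g α β * ξ α * n β = S2 := by
    rw [hS2, Finset.sum_comm]
    apply Finset.sum_congr rfl; intro β _
    apply Finset.sum_congr rfl; intro α _
    rw [hsym α β]; ring
  -- g-quadratic form at ζ equals a-quadratic form at ζ
  have hag : ∑ α, ∑ β, a α β * ζ α * ζ β = ∑ α, ∑ β, g α β * ζ α * ζ β := by
    apply Finset.sum_congr rfl; intro α _
    apply Finset.sum_congr rfl; intro β _
    rcases eq_or_ne α 0 with h0 | h0
    · rw [h0, hζ0]; ring
    rcases eq_or_ne β 0 with h1 | h1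
    · rw [h1, hζ0]; ring
    · rw [ha]
      simp [h0, h1]
  have hQζ : 0 ≤ ∑ α, ∑ β, g α β * ζ α * ζ β := hag ▸ hpsd ζ
  -- expand
  have hexp : ∑ α, ∑ β, g α β * ζ α * ζ β
      = S1 - c * (∑ α, ∑ β, g α β * ξ α * n β) - c * S2
        + c^2 * (∑ α, ∑ β, g α β * n α * n β) := by
    simp only [hS1, hS2, hζ, Finset.mul_sum, ← Finset.sum_sub_distrib,
      ← Finset.sum_add_distrib]
    apply Finset.sum_congr rfl; intro α _
    apply Finset.sum_congr rfl; intro β _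
    ring
  rw [hnull, hS3] at hexp
  have key : 0 ≤ S1 - 2 * c * S2 := by
    have := hQζ
    rw [hexp] at this
    linarith
  have hcn : c * n 0 = ξ 0 := by
    rw [hc]; field_simp
  have key2 : n 0 * (S1 - 2 * c * S2) = n 0 * S1 - 2 * ξ 0 * S2 := by
    rw [← hcn]; ring
  have key3 := mul_nonneg hn0.le key
  rw [key2] at key3
  nlinarith [mul_nonneg hn0.le hF]
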